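/- arXiv:2404.03931 — 4 statements merged into one kernel-verified Lean document; each statement's English description precedes it below -/
import Mathlib

section
/- Let a, b ∈ A with a ≠ b and let F be a square-integrable σ(X) ∨ σ(Z)-measurable random variable. Then almost surely: (i) D_a(D_a F) = D_a F; (ii) D_a(D_b F) = D_b(D_a F); and (iii) E[ E[F | 𝒢^a] | 𝒢^b ] = E[ E[F | 𝒢^b] | 𝒢^a ]. -/
open MeasureTheory ProbabilityTheory

section Setup

variable {Ω E₀ : Type*} {A : Type*} {E : A → Type*}
variable [MeasurableSpace Ω] [MeasurableSpace E₀] [∀ a, MeasurableSpace (E a)]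

/-- The σ-algebra σ(Z) generated by the latent variable `Z`. -/
def sigmaZ (Z : Ω → E₀) : MeasurableSpace Ω :=
  MeasurableSpace.comap Z inferInstance

/-- The σ-algebra σ(X) generated by the whole family `X`. -/
def sigmaX (X : ∀ a, Ω → E a) : MeasurableSpace Ω :=
  ⨆ a, MeasurableSpace.comap (X a) inferInstance

/-- The σ-algebra σ((X_b)_{b ∈ L}) ∨ σ(Z). -/
def sigmaSub (X : ∀ a, Ω → E a) (Z : Ω → E₀) (L : Finset A) : MeasurableSpace Ω :=
  (⨆ b ∈ L, MeasurableSpace.comap (X b) inferInstance) ⊔ sigmaZ Z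

/-- The σ-algebra 𝒢^a = σ((X_b)_{b ≠ a}) ∨ σ(Z). -/
def Gminus (X : ∀ a, Ω → E a) (Z : Ω → E₀) (a : A) : MeasurableSpace Ω :=
  (⨆ b ≠ a, MeasurableSpace.comap (X b) inferInstance) ⊔ sigmaZ Z

/-- The discrete Malliavin gradient `D_a F = F - E[F | 𝒢^a]`. -/
noncomputable def Dgrad (P : Measure Ω) (X : ∀ a, Ω → E a) (Z : Ω → E₀)
    (a : A) (F : Ω → ℝ) : Ω → ℝ :=
  fun ω => F ω - (P[F | Gminus X Z a]) ω

/-- Conditional independence of the family `X` given `Z`: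
`ℙ(X_a ∈ s | 𝒢^a) = ℙ(X_a ∈ s | σ(Z))` a.s. for every `a` and measurable `s`. -/
def CondIndep (P : Measure Ω) (X : ∀ a, Ω → E a) (Z : Ω → E₀) : Prop :=
  ∀ (a : A) (s : Set (E a)), MeasurableSet s →
    (P[(X a ⁻¹' s).indicator (fun _ => (1 : ℝ)) | Gminus X Z a])
      =ᵐ[P] (P[(X a ⁻¹' s).indicator (fun _ => (1 : ℝ)) | sigmaZ Z])

/-- The random vector `X = (X_a)_{a ∈ A}`. -/
def Xvec (X : ∀ a, Ω → E a) : Ω → ∀ a, E a := fun ω a => X a ω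

/-- The difference operator `Δ^a F = f(X) - f(X^{a}, X'_a)`. -/
noncomputable def Delta [DecidableEq A] (X X' : ∀ a, Ω → E a)
    (f : (∀ a, E a) → ℝ) (a : A) : Ω → ℝ :=
  fun ω => f (Xvec X ω) - f (Function.update (Xvec X ω) a (X' a ω))

/-- The combined family of spaces indexed by `A ⊕ A`. -/
def pairFam (E : A → Type*) : A ⊕ A → Type _ := Sum.elim E E

instance pairFamMS : ∀ s, MeasurableSpace (pairFam E s)
  | .inl a => inferInstanceAs (MeasurableSpace (E a))
  | .inr a => inferInstanceAs (MeasurableSpace (E a))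

/-- The combined family `(X, X')` indexed by `A ⊕ A`. -/
def pairX (X X' : ∀ a, Ω → E a) : ∀ s, Ω → pairFam E s
  | .inl a => X a
  | .inr a => X' a

/-- `X'_a` has the same conditional distribution given `Z` as `X_a`, for each `a`. -/
def SameCondLaw (P : Measure Ω) (X X' : ∀ a, Ω → E a) (Z : Ω → E₀) : Prop :=
  ∀ (a : A) (s : Set (E a)), MeasurableSet s →
    (P[(X a ⁻¹' s).indicator (fun _ => (1 : ℝ)) | sigmaZ Z])
      =ᵐ[P] (P[(X' a ⁻¹' s).indicator (fun _ => (1 : ℝ)) | sigmaZ Z])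

/-- The carré du champ operator
`Γ(F,G) = (1/2) ∑_a E[(Δ^a F)(Δ^a G) | σ(X) ∨ σ(Z)]` (finite index set). -/
noncomputable def Gamma [Fintype A] [DecidableEq A] (P : Measure Ω)
    (X X' : ∀ a, Ω → E a) (Z : Ω → E₀) (f g : (∀ a, E a) → ℝ) : Ω → ℝ :=
  fun ω => (1/2) * ∑ a,
    (P[fun ω' => Delta X X' f a ω' * Delta X X' g a ω' | sigmaX X ⊔ sigmaZ Z]) ω

end Setup


section Aux
set_option linter.unusedSectionVars false

variable {Ω E₀ : Type*} {A : Type*} {E : A → Type*}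
variable [MeasurableSpace Ω] [MeasurableSpace E₀] [∀ a, MeasurableSpace (E a)]

/-- The σ-algebra σ((X_c)_{c ≠ a, c ≠ b}) ∨ σ(Z). -/
def Gab (X : ∀ a, Ω → E a) (Z : Ω → E₀) (a b : A) : MeasurableSpace Ω :=
  (⨆ c, ⨆ _ : c ≠ a ∧ c ≠ b, MeasurableSpace.comap (X c) inferInstance) ⊔ sigmaZ Z

variable {X : ∀ a, Ω → E a} {Z : Ω → E₀}

lemma sigmaZ_le' (hZ : Measurable Z) : sigmaZ Z ≤ ‹MeasurableSpace Ω› := hZ.comap_le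

lemma Gminus_le' (hX : ∀ a, Measurable (X a)) (hZ : Measurable Z) (a : A) :
    Gminus X Z a ≤ ‹MeasurableSpace Ω› :=
  sup_le (iSup₂_le fun c _ => (hX c).comap_le) hZ.comap_le

lemma Gab_le' (hX : ∀ a, Measurable (X a)) (hZ : Measurable Z) (a b : A) :
    Gab X Z a b ≤ ‹MeasurableSpace Ω› :=
  sup_le (iSup₂_le fun c _ => (hX c).comap_le) hZ.comap_le

lemma sigmaZ_le_Gab (a b : A) : sigmaZ Z ≤ Gab X Z a b := le_sup_right

lemma Gab_le_left (a b : A) : Gab X Z a b ≤ Gminus X Z a :=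
  sup_le_sup_right (iSup₂_le fun c hc =>
    le_iSup₂ (f := fun c (_ : c ≠ a) => MeasurableSpace.comap (X c) inferInstance) c hc.1) _

lemma Gab_le_right (a b : A) : Gab X Z a b ≤ Gminus X Z b :=
  sup_le_sup_right (iSup₂_le fun c hc =>
    le_iSup₂ (f := fun c (_ : c ≠ b) => MeasurableSpace.comap (X c) inferInstance) c hc.2) _

lemma Gab_symm (a b : A) : Gab X Z a b = Gab X Z b a := by
  unfold Gab
  congr 1
  exact iSup_congr fun c => iSup_congr_Prop and_comm (fun _ => rfl)

lemma Gminus_split {a b : A} (hab : a ≠ b) :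
    Gminus X Z b = MeasurableSpace.comap (X a) inferInstance ⊔ Gab X Z a b := by
  apply le_antisymm
  · unfold Gminus
    refine sup_le (iSup₂_le fun c hc => ?_) (le_sup_of_le_right (sigmaZ_le_Gab a b))
    by_cases hca : c = a
    · subst hca; exact le_sup_left
    · refine le_sup_of_le_right (le_sup_of_le_left ?_)
      exact le_iSup₂ (f := fun c (_ : c ≠ a ∧ c ≠ b) =>
        MeasurableSpace.comap (X c) inferInstance) c ⟨hca, hc⟩
  · refine sup_le ?_ (Gab_le_right a b)
    refine le_sup_of_le_left ?_
    exact le_iSup₂ (f := fun c (_ : c ≠ b) =>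
      MeasurableSpace.comap (X c) inferInstance) a hab

/-- A π-system generating `Gminus X Z b` adapted to the pair `a, b`. -/
def piSys (X : ∀ a, Ω → E a) (Z : Ω → E₀) (a b : A) : Set (Set Ω) :=
  {s | ∃ t, MeasurableSet t ∧ ∃ u, MeasurableSet[Gab X Z a b] u ∧ s = X a ⁻¹' t ∩ u}

lemma isPiSystem_piSys (a b : A) : IsPiSystem (piSys X Z a b) := by
  rintro s ⟨t, ht, u, hu, rfl⟩ s' ⟨t', ht', u', hu', rfl⟩ -
  refine ⟨t ∩ t', ht.inter ht', u ∩ u', hu.inter hu', ?_⟩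
  ext x
  simp only [Set.mem_inter_iff, Set.mem_preimage]
  tauto

lemma generateFrom_piSys {a b : A} (hab : a ≠ b) :
    Gminus X Z b = MeasurableSpace.generateFrom (piSys X Z a b) := by
  rw [Gminus_split hab]
  apply le_antisymm
  · refine sup_le ?_ ?_
    · intro s hs
      obtain ⟨t, ht, rfl⟩ := hs
      exact MeasurableSpace.measurableSet_generateFrom
        ⟨t, ht, Set.univ, MeasurableSet.univ, (Set.inter_univ _).symm⟩
    · intro u hu
      refine MeasurableSpace.measurableSet_generateFrom
        ⟨Set.univ, MeasurableSet.univ, u, hu, ?_⟩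
      simp
  · refine MeasurableSpace.generateFrom_le ?_
    rintro s ⟨t, ht, u, hu, rfl⟩
    exact MeasurableSet.inter
      ((le_sup_left : MeasurableSpace.comap (X a) inferInstance ≤ _) _ ⟨t, ht, rfl⟩)
      ((le_sup_right : Gab X Z a b ≤ _) _ hu)

lemma integral_mul_condexp' {Ω' : Type*} [m0 : MeasurableSpace Ω'] {m : MeasurableSpace Ω'}
    (hm : m ≤ m0) (P : @Measure Ω' m0) [IsFiniteMeasure P] {k f : Ω' → ℝ}
    (hk : StronglyMeasurable[m] k) (hf : Integrable f P) (hkf : Integrable (k * f) P) :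
    ∫ x, (k * f) x ∂P = ∫ x, (k * P[f|m]) x ∂P := by
  rw [← integral_condExp hm (f := k * f)]
  exact integral_congr_ae (condExp_mul_of_stronglyMeasurable_left hk hkf hf)

/-- Key lemma: if `G` is `Gminus X Z a`-measurable, then conditioning it on `Gminus X Z b`
is the same as conditioning on the smaller σ-algebra `Gab X Z a b`. -/
lemma condexp_Gminus_eq_condexp_Gab
    (P : Measure Ω) [IsProbabilityMeasure P]
    (hZ : Measurable Z) (hX : ∀ a, Measurable (X a)) (hCI : CondIndep P X Z)
    {a b : A} (hab : a ≠ b) {G : Ω → ℝ}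
    (hGint : Integrable G P) (hGmeas : StronglyMeasurable[Gminus X Z a] G) :
    P[G | Gminus X Z b] =ᵐ[P] P[G | Gab X Z a b] := by
  have hma : Gminus X Z a ≤ ‹MeasurableSpace Ω› := Gminus_le' hX hZ a
  have hmb : Gminus X Z b ≤ ‹MeasurableSpace Ω› := Gminus_le' hX hZ b
  have hmab : Gab X Z a b ≤ ‹MeasurableSpace Ω› := Gab_le' hX hZ a b
  -- the key set-integral identity
  have main : ∀ s : Set Ω, MeasurableSet[Gminus X Z b] s →
      ∫ x in s, (P[G | Gab X Z a b]) x ∂P = ∫ x in s, G x ∂P := by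
    intro s hs
    refine MeasurableSpace.induction_on_inter (m := Gminus X Z b)
      (C := fun s _ => ∫ x in s, (P[G | Gab X Z a b]) x ∂P = ∫ x in s, G x ∂P)
      (generateFrom_piSys hab) (isPiSystem_piSys a b) (by simp) ?_ ?_ ?_ s hs
    · -- basic case
      rintro s ⟨t, ht, u, hu, rfl⟩
      have htm : MeasurableSet (X a ⁻¹' t) := hX a ht
      have hum : MeasurableSet u := hmab u hu
      have huGa : MeasurableSet[Gminus X Z a] u := Gab_le_left a b u hu
      have hci := hCI a t ht
      set f : Ω → ℝ := (X a ⁻¹' t).indicator (fun _ => (1:ℝ)) with hfdef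
      have hfb : ∀ x, |f x| ≤ (1:ℝ) := by
        intro x
        by_cases hx : x ∈ X a ⁻¹' t <;> simp [hfdef, Set.indicator_apply, hx]
      have hfint : Integrable f P := (integrable_const (1:ℝ)).indicator htm
      -- conditional expectation facts
      have hq : P[f | Gab X Z a b] =ᵐ[P] P[f | sigmaZ Z] := by
        have e1 : P[f | Gab X Z a b] =ᵐ[P] P[P[f | Gminus X Z a] | Gab X Z a b] :=
          (condExp_condExp_of_le (Gab_le_left a b) hma).symm
        have e2 : P[P[f | Gminus X Z a] | Gab X Z a b]
            =ᵐ[P] P[P[f | sigmaZ Z] | Gab X Z a b] := condExp_congr_ae hci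
        have e3 : P[P[f | sigmaZ Z] | Gab X Z a b] = P[f | sigmaZ Z] :=
          condExp_of_stronglyMeasurable hmab
            (stronglyMeasurable_condExp.mono (sigmaZ_le_Gab a b)) integrable_condExp
        exact e1.trans (e2.trans (by rw [e3]))
      have hqbdd : ∀ᵐ x ∂P, |(P[f | sigmaZ Z]) x| ≤ ((1 : NNReal) : ℝ) :=
        ae_bdd_condExp_of_ae_bdd (R := 1)
          (Filter.Eventually.of_forall fun x => by simpa using hfb x)
      -- set-integral reduction
      have hind : ∀ h : Ω → ℝ, ∫ x in X a ⁻¹' t ∩ u, h x ∂P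
          = ∫ x, (u.indicator h * f) x ∂P := by
        intro h
        rw [← integral_indicator (htm.inter hum)]
        refine integral_congr_ae (Filter.Eventually.of_forall fun x => ?_)
        by_cases h1 : x ∈ X a ⁻¹' t <;> by_cases h2 : x ∈ u <;>
          simp [hfdef, Set.indicator_apply, h1, h2]
      have hmulind : ∀ h : Ω → ℝ,
          (u.indicator h * f) = (X a ⁻¹' t).indicator (u.indicator h) := by
        intro h
        funext x
        by_cases h1 : x ∈ X a ⁻¹' t <;> simp [hfdef, Set.indicator_apply, h1]
      have hrear : ∀ h : Ω → ℝ,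
          (u.indicator h * P[f | sigmaZ Z]) = (u.indicator (P[f | sigmaZ Z]) * h) := by
        intro h
        funext x
        by_cases hxu : x ∈ u <;> simp [Set.indicator_apply, hxu, mul_comm]
      rw [hind, hind]
      have hw_sm : StronglyMeasurable[Gab X Z a b] (u.indicator (P[f | sigmaZ Z])) :=
        (stronglyMeasurable_condExp.mono (sigmaZ_le_Gab a b)).indicator hu
      have hwb : ∀ᵐ x ∂P, ‖(u.indicator (P[f | sigmaZ Z])) x‖ ≤ 1 := by
        filter_upwards [hqbdd] with x hx
        by_cases hxu : x ∈ u
        · simpa [Set.indicator_apply, hxu, Real.norm_eq_abs] using hx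
        · simp [Set.indicator_apply, hxu]
      have hwG_int : Integrable (u.indicator (P[f | sigmaZ Z]) * G) P := by
        have := hGint.bdd_mul (c := 1)
          (((stronglyMeasurable_condExp.mono (sigmaZ_le' hZ)).indicator hum).aestronglyMeasurable)
          hwb
        exact this
      calc ∫ x, (u.indicator (P[G | Gab X Z a b]) * f) x ∂P
          = ∫ x, (u.indicator (P[G | Gab X Z a b]) * P[f | Gab X Z a b]) x ∂P := by
            refine integral_mul_condexp' hmab P
              (stronglyMeasurable_condExp.indicator hu) hfint ?_
            rw [hmulind]
            exact (integrable_condExp.indicator hum).indicator htm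
        _ = ∫ x, (u.indicator (P[G | Gab X Z a b]) * P[f | sigmaZ Z]) x ∂P := by
            refine integral_congr_ae ?_
            filter_upwards [hq] with x hx
            simp only [Pi.mul_apply, hx]
        _ = ∫ x, (u.indicator (P[f | sigmaZ Z]) * P[G | Gab X Z a b]) x ∂P := by
            rw [hrear]
        _ = ∫ x, (u.indicator (P[f | sigmaZ Z]) * G) x ∂P :=
            (integral_mul_condexp' hmab P hw_sm hGint hwG_int).symm
        _ = ∫ x, (u.indicator G * P[f | sigmaZ Z]) x ∂P := by rw [hrear]
        _ = ∫ x, (u.indicator G * P[f | Gminus X Z a]) x ∂P := by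
            refine integral_congr_ae ?_
            filter_upwards [hci] with x hx
            simp only [Pi.mul_apply, hx]
        _ = ∫ x, (u.indicator G * f) x ∂P := by
            refine (integral_mul_condexp' hma P (hGmeas.indicator huGa) hfint ?_).symm
            rw [hmulind]
            exact (hGint.indicator hum).indicator htm
    · -- complement
      intro t htm hC
      have ht0 : MeasurableSet t := hmb t htm
      have h1 := integral_add_compl ht0
        (integrable_condExp : Integrable (P[G | Gab X Z a b]) P)
      have h2 := integral_add_compl ht0 hGint
      have h3 : ∫ x, (P[G | Gab X Z a b]) x ∂P = ∫ x, G x ∂P := integral_condExp hmab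
      linarith
    · -- countable disjoint union
      intro g hdisj hgm hC
      rw [integral_iUnion (fun i => hmb _ (hgm i)) hdisj integrable_condExp.integrableOn,
        integral_iUnion (fun i => hmb _ (hgm i)) hdisj hGint.integrableOn]
      exact tsum_congr hC
  exact (ae_eq_condExp_of_forall_setIntegral_eq hmb hGint
    (fun s _ _ => integrable_condExp.integrableOn)
    (fun s hs _ => main s hs)
    ((stronglyMeasurable_condExp.mono (Gab_le_right a b)).aestronglyMeasurable)).symm

end Aux

/-- commutation properties of the discrete gradient. -/
theorem gradient_commutation
    {Ω E₀ : Type*} {A : Type*} {E : A → Type*}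
    [MeasurableSpace Ω] [MeasurableSpace E₀] [∀ a, MeasurableSpace (E a)]
    [StandardBorelSpace E₀] [∀ a, StandardBorelSpace (E a)] [Countable A]
    (P : Measure Ω) [IsProbabilityMeasure P]
    (Z : Ω → E₀) (hZ : Measurable Z)
    (X : ∀ a, Ω → E a) (hX : ∀ a, Measurable (X a))
    (hCI : CondIndep P X Z)
    (a b : A) (hab : a ≠ b)
    (F : Ω → ℝ) (hF : MemLp F 2 P)
    (hFmeas : Measurable[sigmaX X ⊔ sigmaZ Z] F) :
    (Dgrad P X Z a (Dgrad P X Z a F) =ᵐ[P] Dgrad P X Z a F)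
    ∧ (Dgrad P X Z a (Dgrad P X Z b F) =ᵐ[P] Dgrad P X Z b (Dgrad P X Z a F))
    ∧ (P[P[F | Gminus X Z a] | Gminus X Z b]
        =ᵐ[P] P[P[F | Gminus X Z b] | Gminus X Z a]) := by
  have hma : Gminus X Z a ≤ ‹MeasurableSpace Ω› := Gminus_le' hX hZ a
  have hmb : Gminus X Z b ≤ ‹MeasurableSpace Ω› := Gminus_le' hX hZ b
  have hFi : Integrable F P := hF.integrable one_le_two
  -- part (iii)
  have h3 : P[P[F | Gminus X Z a] | Gminus X Z b]
      =ᵐ[P] P[P[F | Gminus X Z b] | Gminus X Z a] := by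
    have k1 := condexp_Gminus_eq_condexp_Gab P hZ hX hCI hab
      (G := P[F | Gminus X Z a]) integrable_condExp stronglyMeasurable_condExp
    have k2 : P[P[F | Gminus X Z a] | Gab X Z a b] =ᵐ[P] P[F | Gab X Z a b] :=
      condExp_condExp_of_le (Gab_le_left a b) hma
    have k1' := condexp_Gminus_eq_condexp_Gab P hZ hX hCI hab.symm
      (G := P[F | Gminus X Z b]) integrable_condExp stronglyMeasurable_condExp
    have k2' : P[P[F | Gminus X Z b] | Gab X Z b a] =ᵐ[P] P[F | Gab X Z b a] :=
      condExp_condExp_of_le (Gab_le_left b a) hmb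
    rw [← Gab_symm (X := X) (Z := Z) a b] at k1' k2'
    exact (k1.trans k2).trans ((k1'.trans k2').symm)
  have hsub_a : P[Dgrad P X Z b F | Gminus X Z a]
      =ᵐ[P] P[F | Gminus X Z a] - P[P[F | Gminus X Z b] | Gminus X Z a] :=
    condExp_sub hFi integrable_condExp _
  have hsub_b : P[Dgrad P X Z a F | Gminus X Z b]
      =ᵐ[P] P[F | Gminus X Z b] - P[P[F | Gminus X Z a] | Gminus X Z b] :=
    condExp_sub hFi integrable_condExp _
  have h0 : P[Dgrad P X Z a F | Gminus X Z a] =ᵐ[P] 0 := by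
    have hidem : P[P[F | Gminus X Z a] | Gminus X Z a] =ᵐ[P] P[F | Gminus X Z a] :=
      condExp_condExp_of_le le_rfl hma
    refine (condExp_sub hFi integrable_condExp (m := Gminus X Z a) :
      P[Dgrad P X Z a F | Gminus X Z a] =ᵐ[P] _).trans ?_
    filter_upwards [hidem] with ω hω
    simp [Pi.sub_apply, hω]
  refine ⟨?_, ?_, h3⟩
  · -- part (i)
    filter_upwards [h0] with ω hω
    show Dgrad P X Z a F ω - (P[Dgrad P X Z a F | Gminus X Z a]) ω = Dgrad P X Z a F ω
    rw [hω]
    simp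
  · -- part (ii)
    filter_upwards [hsub_a, hsub_b, h3] with ω h1 h2 h3ω
    show Dgrad P X Z b F ω - (P[Dgrad P X Z b F | Gminus X Z a]) ω
        = Dgrad P X Z a F ω - (P[Dgrad P X Z a F | Gminus X Z b]) ω
    rw [h1, h2]
    simp only [Dgrad, Pi.sub_apply]
    linarith [h3ω]
end

section
/- Let F be a square-integrable σ(X) ∨ σ(Z)-measurable random variable such that the series ∑_{a∈A} D_a F converges in L²(ℙ). Then for every λ > 0, λ · ‖F‖_{L²} ≤ ‖λ F + ∑_{a∈A} D_a F‖_{L²}; that is, the Ornstein–Uhlenbeck operator L F = −∑_{a∈A} D_a F is dissipative on L². -/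
open MeasureTheory ProbabilityTheory

open Filter
open scoped RealInnerProductSpace ENNReal

section AuxLemmas


variable {Ω' : Type*} {m m0 : MeasurableSpace Ω'} {P : Measure Ω'}

lemma aux_integrable_mul [IsProbabilityMeasure P] {f g : Ω' → ℝ}
    (hf : MemLp f 2 P) (hg : MemLp g 2 P) :
    Integrable (fun ω => f ω * g ω) P := by
  refine (hf.integrable_sq.add hg.integrable_sq).mono'
    (hf.aestronglyMeasurable.mul hg.aestronglyMeasurable)
    (Filter.Eventually.of_forall fun ω => ?_)
  simp only [Pi.add_apply, Real.norm_eq_abs, abs_mul]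
  nlinarith [sq_nonneg (|f ω| - |g ω|), sq_abs (f ω), sq_abs (g ω), abs_nonneg (f ω),
    abs_nonneg (g ω)]

lemma aux_finiteTrim [IsProbabilityMeasure P] (hm : m ≤ m0) :
    IsFiniteMeasure (P.trim hm) :=
  ⟨by rw [trim_measurableSet_eq hm (@MeasurableSet.univ _ m)]; exact measure_lt_top P _⟩

lemma aux_condexp_memLp2 (hm : m ≤ m0) [IsProbabilityMeasure P] {f : Ω' → ℝ}
    (hf : MemLp f 2 P) : MemLp (P[f|m]) 2 P := by
  haveI : IsFiniteMeasure (P.trim hm) := aux_finiteTrim hm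
  set g : Lp ℝ 2 P := ((condExpL2 ℝ ℝ hm (hf.toLp f)) : Lp ℝ 2 P) with hg
  have heq : (⇑g) =ᵐ[P] P[f|m] := by
    refine ae_eq_condExp_of_forall_setIntegral_eq hm (hf.integrable one_le_two)
      (fun s hs hμs => ((Lp.memLp g).integrable one_le_two).integrableOn)
      (fun s hs hμs => ?_) (lpMeas.aestronglyMeasurable _)
    rw [integral_condExpL2_eq hm (hf.toLp f) hs hμs.ne]
    exact integral_congr_ae (ae_restrict_of_ae hf.coeFn_toLp)
  exact (Lp.memLp g).ae_eq heq

lemma aux_int_nonneg (hm : m ≤ m0) [IsProbabilityMeasure P] {f : Ω' → ℝ}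
    (hf : MemLp f 2 P) :
    0 ≤ ∫ ω, f ω * (f ω - (P[f|m]) ω) ∂P := by
  haveI : IsFiniteMeasure (P.trim hm) := aux_finiteTrim hm
  set C := P[f|m] with hCdef
  have hC : MemLp C 2 P := aux_condexp_memLp2 hm hf
  have hD : MemLp (fun ω => f ω - C ω) 2 P := hf.sub hC
  have hCf : Integrable (C * f) P := aux_integrable_mul hC hf
  have hCC : Integrable (fun ω => C ω * C ω) P := aux_integrable_mul hC hC
  have hCD : Integrable (fun ω => C ω * (f ω - C ω)) P := aux_integrable_mul hC hD
  have hDsq : Integrable (fun ω => (f ω - C ω) ^ 2) P := hD.integrable_sq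
  have h1 : ∫ ω, C ω * f ω ∂P = ∫ ω, C ω * C ω ∂P := by
    have hpull : P[C * f|m] =ᵐ[P] C * P[f|m] :=
      condExp_mul_of_stronglyMeasurable_left stronglyMeasurable_condExp hCf (hf.integrable one_le_two)
    calc ∫ ω, C ω * f ω ∂P = ∫ ω, (P[C * f|m]) ω ∂P := (integral_condExp (μ := P) (f := C * f) hm).symm
      _ = ∫ ω, C ω * C ω ∂P := by
          refine integral_congr_ae (hpull.mono fun ω hω => ?_)
          simp only [hω, Pi.mul_apply, ← hCdef]
  have h2 : ∫ ω, C ω * (f ω - C ω) ∂P = 0 := by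
    have h : ∫ ω, C ω * (f ω - C ω) ∂P
        = (∫ ω, C ω * f ω ∂P) - ∫ ω, C ω * C ω ∂P := by
      rw [← integral_sub (aux_integrable_mul hC hf) hCC]
      congr 1; ext ω; ring
    rw [h, h1, sub_self]
  have h3 : ∫ ω, f ω * (f ω - C ω) ∂P
      = (∫ ω, (f ω - C ω) ^ 2 ∂P) + ∫ ω, C ω * (f ω - C ω) ∂P := by
    rw [← integral_add hDsq hCD]
    congr 1; ext ω; ring
  rw [h3, h2, add_zero]
  exact integral_nonneg fun ω => sq_nonneg _

lemma aux_coeFn_finset_sum {ι : Type*} (t : Finset ι) (f : ι → Lp ℝ 2 P) :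
    (⇑(∑ a ∈ t, f a)) =ᵐ[P] fun ω => ∑ a ∈ t, f a ω := by
  classical
  induction t using Finset.induction with
  | empty =>
    simp only [Finset.sum_empty]
    filter_upwards [Lp.coeFn_zero (E := ℝ) (p := 2) (μ := P)] with ω h
    simpa using h
  | @insert a t h ih =>
    filter_upwards [Lp.coeFn_add (f a) (∑ b ∈ t, f b), ih] with ω h1 h2
    rw [Finset.sum_insert h, Finset.sum_insert h, h1, Pi.add_apply, h2]

end AuxLemmas

/-- the Ornstein–Uhlenbeck operator `L F = -∑_a D_a F` is dissipative on `L²`. -/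
theorem OU_dissipative
    {Ω E₀ : Type*} {A : Type*} {E : A → Type*}
    [MeasurableSpace Ω] [MeasurableSpace E₀] [∀ a, MeasurableSpace (E a)]
    [StandardBorelSpace E₀] [∀ a, StandardBorelSpace (E a)] [Countable A]
    (P : Measure Ω) [IsProbabilityMeasure P]
    (Z : Ω → E₀) (hZ : Measurable Z)
    (X : ∀ a, Ω → E a) (hX : ∀ a, Measurable (X a))
    (hCI : CondIndep P X Z)
    (F : Ω → ℝ) (hF : MemLp F 2 P)
    (hFmeas : Measurable[sigmaX X ⊔ sigmaZ Z] F)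
    -- the series `∑_a D_a F` converges in `L²` to `S`
    (S : Ω → ℝ) (hS : MemLp S 2 P)
    (hconv : Filter.Tendsto
      (fun s : Finset A => eLpNorm ((∑ a ∈ s, Dgrad P X Z a F) - S) 2 P)
      Filter.atTop (nhds 0)) :
    ∀ lam : ℝ, 0 < lam →
      ENNReal.ofReal lam * eLpNorm F 2 P ≤ eLpNorm (fun ω => lam * F ω + S ω) 2 P := by
  intro lam hlam
  classical
  have hGle : ∀ a, Gminus X Z a ≤ ‹MeasurableSpace Ω› := fun a =>
    sup_le (iSup₂_le fun b _ => measurable_iff_comap_le.1 (hX b))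
      (measurable_iff_comap_le.1 hZ)
  have hC : ∀ a, MemLp (P[F|Gminus X Z a]) 2 P := fun a => aux_condexp_memLp2 (hGle a) hF
  have hD : ∀ a, MemLp (Dgrad P X Z a F) 2 P := fun a => hF.sub (hC a)
  set fL : Lp ℝ 2 P := hF.toLp F with hfL
  set sL : Lp ℝ 2 P := hS.toLp S with hsL
  set dL : A → Lp ℝ 2 P := fun a => (hD a).toLp with hdL
  have hinner_nonneg : ∀ a, 0 ≤ ⟪fL, dL a⟫ := by
    intro a
    have h0 : ⟪fL, dL a⟫ = ∫ ω, F ω * (Dgrad P X Z a F) ω ∂P := by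
      rw [L2.inner_def]
      refine integral_congr_ae ?_
      filter_upwards [hF.coeFn_toLp, (hD a).coeFn_toLp] with ω h1 h2
      rw [h1, h2]
      simp [RCLike.inner_apply, mul_comm]
    rw [h0]
    exact aux_int_nonneg (hGle a) hF
  have hT : Filter.Tendsto (fun t : Finset A => ∑ a ∈ t, dL a) Filter.atTop (nhds sL) := by
    rw [tendsto_iff_norm_sub_tendsto_zero]
    have heq : (fun t : Finset A => ‖(∑ a ∈ t, dL a) - sL‖)
        = fun t => (eLpNorm ((∑ a ∈ t, Dgrad P X Z a F) - S) 2 P).toReal := by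
      funext t
      rw [Lp.norm_def]
      congr 1
      refine eLpNorm_congr_ae ?_
      have hall : ∀ᵐ ω ∂P, ∀ a, (dL a : Ω → ℝ) ω = Dgrad P X Z a F ω :=
        ae_all_iff.2 fun a => (hD a).coeFn_toLp
      filter_upwards [Lp.coeFn_sub (∑ a ∈ t, dL a) sL, aux_coeFn_finset_sum t dL,
        hS.coeFn_toLp, hall] with ω h1 h2 h3 h4
      rw [h1, Pi.sub_apply, h2, h3, Pi.sub_apply, Finset.sum_apply]
      congr 1
      exact Finset.sum_congr rfl fun a _ => h4 a
    rw [heq]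
    exact (ENNReal.tendsto_toReal ENNReal.zero_ne_top).comp hconv
  have hlim : Filter.Tendsto (fun t : Finset A => ⟪fL, ∑ a ∈ t, dL a⟫)
      Filter.atTop (nhds ⟪fL, sL⟫) := tendsto_const_nhds.inner hT
  have hSpos : 0 ≤ ⟪fL, sL⟫ := by
    refine ge_of_tendsto' hlim fun t => ?_
    rw [inner_sum]
    exact Finset.sum_nonneg fun a _ => hinner_nonneg a
  have hkey : lam * ‖fL‖ ^ 2 ≤ ‖fL‖ * ‖lam • fL + sL‖ := by
    calc lam * ‖fL‖ ^ 2 = lam * ⟪fL, fL⟫ := by rw [real_inner_self_eq_norm_sq]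
      _ ≤ lam * ⟪fL, fL⟫ + ⟪fL, sL⟫ := le_add_of_nonneg_right hSpos
      _ = ⟪fL, lam • fL + sL⟫ := by rw [inner_add_right, real_inner_smul_right]
      _ ≤ ‖fL‖ * ‖lam • fL + sL‖ := real_inner_le_norm _ _
  have hreal : lam * ‖fL‖ ≤ ‖lam • fL + sL‖ := by
    rcases (norm_nonneg fL).eq_or_lt' with h0 | h0
    · rw [h0, mul_zero]; exact norm_nonneg _
    · nlinarith [hkey, h0]
  have e1 : eLpNorm F 2 P = ENNReal.ofReal ‖fL‖ := by
    rw [← eLpNorm_congr_ae (μ := P) hF.coeFn_toLp, Lp.norm_def,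
      ENNReal.ofReal_toReal (Lp.eLpNorm_ne_top fL)]
  have e2 : eLpNorm (fun ω => lam * F ω + S ω) 2 P = ENNReal.ofReal ‖lam • fL + sL‖ := by
    have hae : (⇑(lam • fL + sL)) =ᵐ[P] fun ω => lam * F ω + S ω := by
      filter_upwards [Lp.coeFn_add (lam • fL) sL, Lp.coeFn_smul lam fL, hF.coeFn_toLp,
        hS.coeFn_toLp] with ω h1 h2 h3 h4
      rw [h1, Pi.add_apply, h2, Pi.smul_apply, smul_eq_mul, h3, h4]
    rw [← eLpNorm_congr_ae hae, Lp.norm_def, ENNReal.ofReal_toReal (Lp.eLpNorm_ne_top _)]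
  rw [e1, e2, ← ENNReal.ofReal_mul hlam.le]
  exact ENNReal.ofReal_le_ofReal hreal
end

section
/- Let m ≥ 1 and suppose F = ∑_{p=1}^m F_p, where each F_p is a square-integrable σ(X) ∨ σ(Z)-measurable random variable such that ∑_{a∈A} D_a F_p converges in L² and equals p·F_p almost surely. Then Var(F) ≤ ∑_{a∈A} E[(D_a F)²]. -/
open MeasureTheory ProbabilityTheory

namespace EfronAux
set_option linter.unusedSectionVars false
open Filter


variable {α : Type*} {m m0 : MeasurableSpace α} {μ : Measure α} [IsProbabilityMeasure μ]

lemma integrable_mul_L2 {f g : α → ℝ} (hf : MemLp f 2 μ) (hg : MemLp g 2 μ) :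
    Integrable (fun x => f x * g x) μ := by
  have h := L2.integrable_inner (𝕜 := ℝ) (hf.toLp f) (hg.toLp g)
  refine h.congr ?_
  filter_upwards [hf.coeFn_toLp, hg.coeFn_toLp] with x h1 h2
  simp [RCLike.inner_apply, h1, h2, mul_comm]

lemma abs_integral_mul_le {f g : α → ℝ} (hf : MemLp f 2 μ) (hg : MemLp g 2 μ) :
    |∫ x, f x * g x ∂μ| ≤ (eLpNorm f 2 μ).toReal * (eLpNorm g 2 μ).toReal := by
  have h1 : ∫ x, f x * g x ∂μ = inner ℝ (hf.toLp f) (hg.toLp g) := by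
    rw [L2.inner_def]
    refine integral_congr_ae ?_
    filter_upwards [hf.coeFn_toLp, hg.coeFn_toLp] with x h1 h2
    simp [RCLike.inner_apply, h1, h2, mul_comm]
  rw [h1, ← Lp.norm_toLp f hf, ← Lp.norm_toLp g hg]
  exact abs_real_inner_le_norm _ _

lemma condexp_ae_eq_condExpL2 (hm : m ≤ m0) {f : α → ℝ} (hf : MemLp f 2 μ) :
    (condExpL2 ℝ ℝ hm (hf.toLp f) : α → ℝ) =ᵐ[μ] μ[f|m] := by
  haveI : SigmaFinite (μ.trim hm) := by infer_instance
  refine ae_eq_condExp_of_forall_setIntegral_eq hm (hf.integrable one_le_two) ?_ ?_ ?_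
  · exact fun s _ _ => (integrable_condExpL2_of_isFiniteMeasure hm).integrableOn
  · intro s hs hμs
    rw [integral_condExpL2_eq hm (hf.toLp f) hs hμs.ne]
    exact setIntegral_congr_ae (hm s hs) (hf.coeFn_toLp.mono fun x hx _ => hx)
  · exact (aestronglyMeasurable_condExpL2 hm _)

lemma memℒp_condexp (hm : m ≤ m0) {f : α → ℝ} (hf : MemLp f 2 μ) :
    MemLp (μ[f|m]) 2 μ :=
  (Lp.memLp ((condExpL2 ℝ ℝ hm (hf.toLp f)) : α →₂[μ] ℝ)).ae_eq
    (condexp_ae_eq_condExpL2 hm hf)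

lemma integral_condexp_mul (hm : m ≤ m0) {f g : α → ℝ} (hf : MemLp f 2 μ) (hg : MemLp g 2 μ) :
    ∫ x, (μ[f|m]) x * g x ∂μ = ∫ x, f x * (μ[g|m]) x ∂μ := by
  have h1 : ∫ x, (μ[f|m]) x * g x ∂μ
      = inner ℝ ((condExpL2 ℝ ℝ hm (hf.toLp f)) : α →₂[μ] ℝ) (hg.toLp g) := by
    rw [L2.inner_def]
    refine integral_congr_ae ?_
    filter_upwards [condexp_ae_eq_condExpL2 hm hf, hg.coeFn_toLp] with x h1 h2
    simp [RCLike.inner_apply, h1, h2, mul_comm]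
  have h2 : ∫ x, f x * (μ[g|m]) x ∂μ
      = inner ℝ (hf.toLp f) ((condExpL2 ℝ ℝ hm (hg.toLp g)) : α →₂[μ] ℝ) := by
    rw [L2.inner_def]
    refine integral_congr_ae ?_
    filter_upwards [condexp_ae_eq_condExpL2 hm hg, hf.coeFn_toLp] with x h1 h2
    simp [RCLike.inner_apply, h1, h2, mul_comm]
  rw [h1, h2, inner_condExpL2_left_eq_right]


lemma memℒp_grad (hm : m ≤ m0) {f : α → ℝ} (hf : MemLp f 2 μ) :
    MemLp (fun x => f x - (μ[f|m]) x) 2 μ :=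
  hf.sub (memℒp_condexp hm hf)

/-- `∫ (f - E[f|m]) * E[h|m] = 0`. -/
lemma integral_grad_mul_condexp (hm : m ≤ m0) {f h : α → ℝ}
    (hf : MemLp f 2 μ) (hh : MemLp h 2 μ) :
    ∫ x, (f x - (μ[f|m]) x) * (μ[h|m]) x ∂μ = 0 := by
  have hch := memℒp_condexp hm hh
  have h1 : ∫ x, (f x - (μ[f|m]) x) * (μ[h|m]) x ∂μ
      = ∫ x, f x * (μ[h|m]) x ∂μ - ∫ x, (μ[f|m]) x * (μ[h|m]) x ∂μ := by
    simp_rw [sub_mul]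
    exact integral_sub (integrable_mul_L2 hf hch) (integrable_mul_L2 (memℒp_condexp hm hf) hch)
  have h2 : ∫ x, (μ[f|m]) x * (μ[h|m]) x ∂μ = ∫ x, f x * (μ[h|m]) x ∂μ := by
    rw [integral_condexp_mul hm hf hch]
    refine integral_congr_ae ?_
    filter_upwards [condExp_condExp_of_le (f := h) (le_refl m) hm] with x hx
    rw [hx]
  rw [h1, h2, sub_self]

/-- `∫ (f - E[f|m]) h = ∫ (f - E[f|m]) (h - E[h|m])`. -/
lemma integral_grad_mul (hm : m ≤ m0) {f h : α → ℝ}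
    (hf : MemLp f 2 μ) (hh : MemLp h 2 μ) :
    ∫ x, (f x - (μ[f|m]) x) * h x ∂μ
      = ∫ x, (f x - (μ[f|m]) x) * (h x - (μ[h|m]) x) ∂μ := by
  have hgf := memℒp_grad hm hf
  have h1 : ∫ x, (f x - (μ[f|m]) x) * (h x - (μ[h|m]) x) ∂μ
      = ∫ x, (f x - (μ[f|m]) x) * h x ∂μ
        - ∫ x, (f x - (μ[f|m]) x) * (μ[h|m]) x ∂μ := by
    simp_rw [mul_sub]
    exact integral_sub (integrable_mul_L2 hgf hh) (integrable_mul_L2 hgf (memℒp_condexp hm hh))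
  rw [h1, integral_grad_mul_condexp hm hf hh, sub_zero]

/-- L² convergence implies convergence of inner products against a fixed L² function. -/
lemma tendsto_integral_mul_of_L2 {ι : Type*} {l : Filter ι}
    {G : ι → α → ℝ} {S h : α → ℝ} (hG : ∀ i, MemLp (G i) 2 μ) (hS : MemLp S 2 μ)
    (hh : MemLp h 2 μ)
    (hconv : Tendsto (fun i => eLpNorm (G i - S) 2 μ) l (nhds 0)) :
    Tendsto (fun i => ∫ x, G i x * h x ∂μ) l (nhds (∫ x, S x * h x ∂μ)) := by
  rw [← tendsto_sub_nhds_zero_iff]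
  have hbound : ∀ i, ‖∫ x, G i x * h x ∂μ - ∫ x, S x * h x ∂μ‖
      ≤ (eLpNorm (G i - S) 2 μ).toReal * (eLpNorm h 2 μ).toReal := by
    intro i
    have hdiff : MemLp (G i - S) 2 μ := (hG i).sub hS
    have heq : ∫ x, G i x * h x ∂μ - ∫ x, S x * h x ∂μ
        = ∫ x, (G i x - S x) * h x ∂μ := by
      rw [← integral_sub (integrable_mul_L2 (hG i) hh) (integrable_mul_L2 hS hh)]
      congr 1; ext x; ring
    rw [heq, Real.norm_eq_abs]
    exact abs_integral_mul_le hdiff hh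
  refine squeeze_zero_norm hbound ?_
  have h1 : Tendsto (fun i => (eLpNorm (G i - S) 2 μ).toReal) l (nhds 0) := by
    have := (ENNReal.tendsto_toReal (by simp : (0 : ENNReal) ≠ ⊤)).comp hconv
    exact this
  have := h1.mul_const ((eLpNorm h 2 μ).toReal)
  simpa using this


end EfronAux

open EfronAux Filter in
/-- Efron–Stein-type inequality for a finite sum of chaoses:
`Var(F) ≤ ∑_a E[(D_a F)²]`. -/
theorem efron_stein_finite_chaos
    {Ω E₀ : Type*} {A : Type*} {E : A → Type*}
    [MeasurableSpace Ω] [MeasurableSpace E₀] [∀ a, MeasurableSpace (E a)]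
    [StandardBorelSpace E₀] [∀ a, StandardBorelSpace (E a)] [Countable A]
    (P : Measure Ω) [IsProbabilityMeasure P]
    (Z : Ω → E₀) (hZ : Measurable Z)
    (X : ∀ a, Ω → E a) (hX : ∀ a, Measurable (X a))
    (hCI : CondIndep P X Z)
    (m : ℕ) (hm : 1 ≤ m)
    (Fp : ℕ → Ω → ℝ)
    (hFp : ∀ p ∈ Finset.Icc 1 m, MemLp (Fp p) 2 P)
    (hFpmeas : ∀ p ∈ Finset.Icc 1 m, Measurable[sigmaX X ⊔ sigmaZ Z] (Fp p))
    -- every `F_p` lies in the `p`-th chaos: `∑_a D_a F_p` converges in `L²` to `p • F_p`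
    (hEigen : ∀ p ∈ Finset.Icc 1 m,
      ∃ S : Ω → ℝ, MemLp S 2 P ∧
        Filter.Tendsto
          (fun s : Finset A => eLpNorm ((∑ a ∈ s, Dgrad P X Z a (Fp p)) - S) 2 P)
          Filter.atTop (nhds 0)
        ∧ S =ᵐ[P] fun ω => (p : ℝ) * Fp p ω)
    (F : Ω → ℝ) (hFdef : F = fun ω => ∑ p ∈ Finset.Icc 1 m, Fp p ω) :
    variance F P ≤ ∑' a, ∫ ω, (Dgrad P X Z a F ω) ^ 2 ∂P := by
  classical
  have hGle : ∀ a, Gminus X Z a ≤ ‹MeasurableSpace Ω› := fun a =>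
    sup_le (iSup_le fun b => iSup_le fun _ => (hX b).comap_le) (hZ.comap_le)
  have hF2 : MemLp F 2 P := by
    rw [hFdef]; exact memLp_finsetSum _ hFp
  have hD2 : ∀ (a : A) (G : Ω → ℝ), MemLp G 2 P → MemLp (Dgrad P X Z a G) 2 P := by
    intro a G hG
    exact hG.sub (memℒp_condexp (hGle a) hG)
  have hDF2 : ∀ a, MemLp (Dgrad P X Z a F) 2 P := fun a => hD2 a F hF2
  -- D_a is L²-orthogonal projection complement: ∫ (D_a G) H = ∫ (D_a G)(D_a H)
  have hproj : ∀ (a : A) (G H : Ω → ℝ), MemLp G 2 P → MemLp H 2 P →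
      ∫ x, Dgrad P X Z a G x * H x ∂P = ∫ x, Dgrad P X Z a G x * Dgrad P X Z a H x ∂P := by
    intro a G H hG hH
    exact integral_grad_mul (hGle a) hG hH
  have hDsq : ∀ a, ∫ x, Dgrad P X Z a F x * F x ∂P = ∫ x, (Dgrad P X Z a F x) ^ 2 ∂P := by
    intro a
    rw [hproj a F F hF2 hF2]
    simp [pow_two]
  -- linearity of the gradient over the chaos decomposition
  have hDsum : ∀ a, ∀ᵐ ω ∂P,
      Dgrad P X Z a F ω = ∑ p ∈ Finset.Icc 1 m, Dgrad P X Z a (Fp p) ω := by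
    intro a
    have hce : P[F | Gminus X Z a]
        =ᵐ[P] ∑ p ∈ Finset.Icc 1 m, P[Fp p | Gminus X Z a] := by
      have h1 : F = ∑ p ∈ Finset.Icc 1 m, Fp p := by
        rw [hFdef]; ext ω; simp
      rw [h1]
      exact condExp_finsetSum (fun p hp => (hFp p hp).integrable one_le_two) _
    filter_upwards [hce] with ω hω
    have hω' : (P[F | Gminus X Z a]) ω
        = ∑ p ∈ Finset.Icc 1 m, (P[Fp p | Gminus X Z a]) ω := by
      rw [hω]; simp
    simp only [Dgrad]
    rw [hω', hFdef]
    simp [← Finset.sum_sub_distrib]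
  choose! S hS2 hStend hSeq using hEigen
  set SS : Ω → ℝ := fun ω => ∑ p ∈ Finset.Icc 1 m, S p ω with hSSdef
  have hSS2 : MemLp SS 2 P := memLp_finsetSum _ (fun p hp => hS2 p hp)
  -- L² convergence of ∑_a D_a F to SS
  have hconv : Tendsto (fun s : Finset A => eLpNorm ((∑ a ∈ s, Dgrad P X Z a F) - SS) 2 P)
      atTop (nhds 0) := by
    have hall : ∀ᵐ ω ∂P, ∀ a : A,
        Dgrad P X Z a F ω = ∑ p ∈ Finset.Icc 1 m, Dgrad P X Z a (Fp p) ω :=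
      ae_all_iff.2 hDsum
    have hbound : ∀ s : Finset A,
        eLpNorm ((∑ a ∈ s, Dgrad P X Z a F) - SS) 2 P
          ≤ ∑ p ∈ Finset.Icc 1 m,
              eLpNorm ((∑ a ∈ s, Dgrad P X Z a (Fp p)) - S p) 2 P := by
      intro s
      have heq : ((∑ a ∈ s, Dgrad P X Z a F) - SS)
          =ᵐ[P] ∑ p ∈ Finset.Icc 1 m, ((∑ a ∈ s, Dgrad P X Z a (Fp p)) - S p) := by
        filter_upwards [hall] with ω hω
        simp only [Pi.sub_apply, Finset.sum_apply, hSSdef]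
        rw [Finset.sum_congr rfl fun a _ => hω a, Finset.sum_comm, ← Finset.sum_sub_distrib]
      rw [eLpNorm_congr_ae heq]
      refine eLpNorm_sum_le (fun p hp => ?_) one_le_two
      exact ((memLp_finsetSum' s fun a _ => hD2 a (Fp p) (hFp p hp)).sub
        (hS2 p hp)).aestronglyMeasurable
    have hlim : Tendsto (fun s : Finset A => ∑ p ∈ Finset.Icc 1 m,
        eLpNorm ((∑ a ∈ s, Dgrad P X Z a (Fp p)) - S p) 2 P) atTop (nhds 0) := by
      have := tendsto_finset_sum (Finset.Icc 1 m)
        (fun p hp => hStend p hp)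
      simpa using this
    exact tendsto_of_tendsto_of_tendsto_of_le_of_le tendsto_const_nhds hlim
      (fun s => zero_le) hbound
  -- the partial sums of ∫ (D_a F)² converge to ∫ SS · F
  have hSum : HasSum (fun a => ∫ ω, (Dgrad P X Z a F ω) ^ 2 ∂P) (∫ x, SS x * F x ∂P) := by
    have hG2 : ∀ s : Finset A, MemLp (∑ a ∈ s, Dgrad P X Z a F) 2 P :=
      fun s => memLp_finsetSum' s fun a _ => hDF2 a
    have ht := tendsto_integral_mul_of_L2 hG2 hSS2 hF2 hconv
    have hval : ∀ s : Finset A,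
        ∫ x, (∑ a ∈ s, Dgrad P X Z a F) x * F x ∂P
          = ∑ a ∈ s, ∫ ω, (Dgrad P X Z a F ω) ^ 2 ∂P := by
      intro s
      simp only [Finset.sum_apply, Finset.sum_mul]
      rw [integral_finset_sum s (fun a _ => integrable_mul_L2 (hDF2 a) hF2)]
      exact Finset.sum_congr rfl fun a _ => hDsq a
    exact (ht.congr hval : _)
  -- orthogonality of chaoses of different orders
  have hortho : ∀ p ∈ Finset.Icc 1 m, ∀ q ∈ Finset.Icc 1 m, p ≠ q →
      ∫ x, Fp p x * Fp q x ∂P = 0 := by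
    intro p hp q hq hpq
    have hppq : ∀ s : Finset A,
        ∫ x, (∑ a ∈ s, Dgrad P X Z a (Fp p)) x * Fp q x ∂P
          = ∫ x, (∑ a ∈ s, Dgrad P X Z a (Fp q)) x * Fp p x ∂P := by
      intro s
      simp only [Finset.sum_apply, Finset.sum_mul]
      rw [integral_finset_sum s (fun a _ => integrable_mul_L2 (hD2 a _ (hFp p hp)) (hFp q hq)),
        integral_finset_sum s (fun a _ => integrable_mul_L2 (hD2 a _ (hFp q hq)) (hFp p hp))]
      refine Finset.sum_congr rfl fun a _ => ?_
      rw [hproj a _ _ (hFp p hp) (hFp q hq), hproj a _ _ (hFp q hq) (hFp p hp)]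
      refine integral_congr_ae (Eventually.of_forall fun x => ?_)
      ring
    have t1 := tendsto_integral_mul_of_L2
      (fun s : Finset A => memLp_finsetSum' s fun a _ => hD2 a _ (hFp p hp))
      (hS2 p hp) (hFp q hq) (hStend p hp)
    have t2 := tendsto_integral_mul_of_L2
      (fun s : Finset A => memLp_finsetSum' s fun a _ => hD2 a _ (hFp q hq))
      (hS2 q hq) (hFp p hp) (hStend q hq)
    have t2' : Tendsto (fun s : Finset A =>
        ∫ x, (∑ a ∈ s, Dgrad P X Z a (Fp p)) x * Fp q x ∂P) atTop
        (nhds (∫ x, S q x * Fp p x ∂P)) := t2.congr fun s => (hppq s).symm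
    have heq := tendsto_nhds_unique t2' t1
    -- heq : ∫ S q * F p = ∫ S p * F q
    have e1 : ∫ x, S p x * Fp q x ∂P = (p : ℝ) * ∫ x, Fp p x * Fp q x ∂P := by
      rw [← integral_const_mul]
      refine integral_congr_ae ?_
      filter_upwards [hSeq p hp] with x hx
      rw [hx]; ring
    have e2 : ∫ x, S q x * Fp p x ∂P = (q : ℝ) * ∫ x, Fp p x * Fp q x ∂P := by
      rw [← integral_const_mul]
      refine integral_congr_ae ?_
      filter_upwards [hSeq q hq] with x hx
      rw [hx]; ring
    rw [e1, e2] at heq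
    have hcast : (q : ℝ) ≠ (p : ℝ) := by exact_mod_cast hpq.symm
    have := sub_eq_zero.mpr heq
    rw [← sub_mul] at this
    exact (mul_eq_zero.1 this).resolve_left (sub_ne_zero.2 hcast)
  -- diagonal expansions
  have hFpF : ∀ p ∈ Finset.Icc 1 m,
      ∫ x, Fp p x * F x ∂P = ∫ x, Fp p x * Fp p x ∂P := by
    intro p hp
    have : ∫ x, Fp p x * F x ∂P = ∑ q ∈ Finset.Icc 1 m, ∫ x, Fp p x * Fp q x ∂P := by
      rw [hFdef]
      simp only [Finset.mul_sum]
      exact integral_finset_sum _ (fun q hq => integrable_mul_L2 (hFp p hp) (hFp q hq))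
    rw [this]
    exact Finset.sum_eq_single_of_mem p hp fun q hq hqp => hortho p hp q hq (Ne.symm hqp)
  have hSF : ∫ x, SS x * F x ∂P
      = ∑ p ∈ Finset.Icc 1 m, (p : ℝ) * ∫ x, Fp p x * Fp p x ∂P := by
    have h1 : ∫ x, SS x * F x ∂P = ∑ p ∈ Finset.Icc 1 m, ∫ x, S p x * F x ∂P := by
      simp only [hSSdef, Finset.sum_mul]
      exact integral_finset_sum _ (fun p hp => integrable_mul_L2 (hS2 p hp) hF2)
    rw [h1]
    refine Finset.sum_congr rfl fun p hp => ?_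
    have e1 : ∫ x, S p x * F x ∂P = (p : ℝ) * ∫ x, Fp p x * F x ∂P := by
      rw [← integral_const_mul]
      refine integral_congr_ae ?_
      filter_upwards [hSeq p hp] with x hx
      rw [hx]; ring
    rw [e1, hFpF p hp]
  have hFF : ∫ x, F x * F x ∂P = ∑ p ∈ Finset.Icc 1 m, ∫ x, Fp p x * Fp p x ∂P := by
    have h1 : ∫ x, F x * F x ∂P = ∑ p ∈ Finset.Icc 1 m, ∫ x, Fp p x * F x ∂P := by
      nth_rewrite 1 [hFdef]
      simp only [Finset.sum_mul]
      exact integral_finset_sum _ (fun p hp => integrable_mul_L2 (hFp p hp) hF2)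
    rw [h1]
    exact Finset.sum_congr rfl fun p hp => hFpF p hp
  have hle : ∫ x, F x * F x ∂P ≤ ∫ x, SS x * F x ∂P := by
    rw [hSF, hFF]
    refine Finset.sum_le_sum fun p hp => ?_
    have hnn : (0 : ℝ) ≤ ∫ x, Fp p x * Fp p x ∂P :=
      integral_nonneg fun x => mul_self_nonneg _
    have hp1 : (1 : ℝ) ≤ (p : ℝ) := by exact_mod_cast (Finset.mem_Icc.1 hp).1
    nlinarith
  calc variance F P ≤ ∫ x, (F ^ 2) x ∂P := variance_le_expectation_sq hF2.aestronglyMeasurable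
    _ = ∫ x, F x * F x ∂P := by refine integral_congr_ae (Eventually.of_forall fun x => ?_); simp [pow_two]
    _ ≤ ∫ x, SS x * F x ∂P := hle
    _ = ∑' a, ∫ ω, (Dgrad P X Z a F ω) ^ 2 ∂P := hSum.tsum_eq.symm
end

section
/- Assume A is finite and let p ≥ 1. Let F = ∑_{I ⊆ A, |I| = p} W_I, where each W_I = h_I(Z, (X_i)_{i∈I}) is in L⁴ and is degenerate: E[W_I | σ((X_i)_{i∈I∖\{a\}}) ∨ σ(Z)] = 0 a.s. for every a ∈ I. Then ∑_{a∈A} E[(Δ^a F)⁴] ≤ 16 p · ∑_{(I,J,K,L) connected} |E[W_I W_J W_K W_L]|, where the sum is over all ordered quadruples (I,J,K,L) of p-element subsets of A that are connected, meaning that the graph on four vertices labelled by I, J, K, L, with an edge between two labels whenever the corresponding sets intersect, is connected. -/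
open MeasureTheory ProbabilityTheory

/-- The (ordered) quadruple of sets `(I,J,K,L)` is connected: the graph on four
vertices labelled `I, J, K, L`, with an edge between two labels whenever the
corresponding sets intersect, is connected. -/
def IntersectConnected4 {A : Type*} [DecidableEq A] (I J K L : Finset A) : Prop :=
  (SimpleGraph.fromRel (fun i j : Fin 4 =>
    ((![I, J, K, L] i) ∩ (![I, J, K, L] j)).Nonempty)).Connected

section AuxLemmas
open MeasureTheory

lemma pow4_sub_le (x y : ℝ) : (x - y)^4 ≤ 8*x^4 + 8*y^4 := by
  nlinarith [sq_nonneg (x+y), sq_nonneg (x-y), sq_nonneg (x^2-y^2), sq_nonneg (x^2+y^2),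
    sq_nonneg (x*y), sq_nonneg x, sq_nonneg y]

lemma sum4_expand {ι : Type*} (s : Finset ι) (f : ι → ℝ) :
    (∑ i ∈ s, f i)^4 = ∑ i ∈ s, ∑ j ∈ s, ∑ k ∈ s, ∑ l ∈ s, f i * f j * f k * f l := by
  have h2 : (∑ i ∈ s, f i)^2 = ∑ i ∈ s, ∑ j ∈ s, f i * f j := by
    rw [sq, Finset.sum_mul_sum]
  have h4 : (∑ i ∈ s, f i)^4 = ∑ i ∈ s, ∑ k ∈ s, (∑ j ∈ s, f i * f j) * (∑ l ∈ s, f k * f l) := by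
    rw [show (4:ℕ) = 2*2 by norm_num, pow_mul, sq, h2, Finset.sum_mul_sum]
  rw [h4]
  refine Finset.sum_congr rfl fun i _ => ?_
  rw [Finset.sum_comm]
  refine Finset.sum_congr rfl fun j _ => ?_
  rw [Finset.sum_mul_sum]
  exact Finset.sum_congr rfl fun k _ => Finset.sum_congr rfl fun l _ => by ring

lemma conn_of_common {A : Type*} [DecidableEq A] {I J K L : Finset A}
    (h : (I ∩ J ∩ K ∩ L).Nonempty) : IntersectConnected4 I J K L := by
  obtain ⟨x, hx⟩ := h
  simp only [Finset.mem_inter] at hx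
  have hmem : ∀ i : Fin 4, x ∈ ![I, J, K, L] i := by
    intro i
    fin_cases i <;> simp [hx.1.1.1, hx.1.1.2, hx.1.2, hx.2]
  constructor
  intro u v
  rcases eq_or_ne u v with rfl | huv
  · exact SimpleGraph.Reachable.refl _
  · exact SimpleGraph.Adj.reachable
      ((SimpleGraph.fromRel_adj _ _ _).mpr ⟨huv, Or.inl ⟨x, Finset.mem_inter.mpr ⟨hmem u, hmem v⟩⟩⟩)

lemma memLp_mul2 {Ω : Type*} [MeasurableSpace Ω] {P : Measure Ω}
    {f g : Ω → ℝ} (hf : MemLp f 4 P) (hg : MemLp g 4 P) :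
    MemLp (fun ω => f ω * g ω) 2 P := by
  have h44 : (1:ENNReal)/2 = 1/4 + 1/4 := by
    rw [ENNReal.div_add_div_same, eq_comm, ENNReal.div_eq_div_iff] <;> norm_num
  simpa [smul_eq_mul, Pi.mul_def] using MemLp.smul (φ := f) (f := g) hg hf (hpqr := ⟨by simpa [one_div] using h44.symm⟩)

lemma integrable_mul4 {Ω : Type*} [MeasurableSpace Ω] {P : Measure Ω}
    {f g h k : Ω → ℝ} (hf : MemLp f 4 P) (hg : MemLp g 4 P)
    (hh : MemLp h 4 P) (hk : MemLp k 4 P) :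
    Integrable (fun ω => f ω * g ω * h ω * k ω) P := by
  have h22 : (1:ENNReal)/1 = 1/2 + 1/2 := by
    rw [ENNReal.div_add_div_same, eq_comm, ENNReal.div_eq_div_iff] <;> norm_num
  have h1 : MemLp (fun ω => (f ω * g ω) * (h ω * k ω)) 1 P := by
    simpa [smul_eq_mul, Pi.mul_def] using
      MemLp.smul (φ := fun ω => f ω * g ω) (f := fun ω => h ω * k ω)
        (memLp_mul2 hh hk) (memLp_mul2 hf hg) (hpqr := ⟨by simpa [one_div] using h22.symm⟩)
  have := memLp_one_iff_integrable.mp h1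
  exact this.congr (by filter_upwards with ω; ring_nf)

end AuxLemmas

section AuxCore
open MeasureTheory

variable {Ω E₀ : Type*} {A : Type*} {E : A → Type*}
variable [MeasurableSpace Ω] [MeasurableSpace E₀] [∀ a, MeasurableSpace (E a)]

lemma measurable_pairX {X X' : ∀ a, Ω → E a} (hX : ∀ a, Measurable (X a))
    (hX' : ∀ a, Measurable (X' a)) : ∀ s, Measurable (pairX X X' s)
  | .inl a => hX a
  | .inr a => hX' a

lemma gminus_le {B : Type*} {G : B → Type*} [∀ b, MeasurableSpace (G b)]
    {Y : ∀ b, Ω → G b} {Z : Ω → E₀} (hY : ∀ b, Measurable (Y b)) (hZ : Measurable Z) (a : B) :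
    Gminus Y Z a ≤ ‹MeasurableSpace Ω› := by
  refine sup_le (iSup_le fun b => iSup_le fun _ => (hY b).comap_le) hZ.comap_le

lemma ms_mono {m1 m2 : MeasurableSpace Ω} (h : m1 ≤ m2) {s : Set Ω}
    (hs : MeasurableSet[m1] s) : MeasurableSet[m2] s := h _ hs

/-- The key exchange identity. -/
lemma swap_measure_eq [Countable A]
    {P : Measure Ω} [IsProbabilityMeasure P]
    {Z : Ω → E₀} (hZ : Measurable Z)
    {X X' : ∀ a, Ω → E a} (hX : ∀ a, Measurable (X a)) (hX' : ∀ a, Measurable (X' a))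
    (hCI : CondIndep P (pairX X X') Z) (hLaw : SameCondLaw P X X' Z)
    (a : A) {D : Set Ω}
    (hD1 : MeasurableSet[Gminus (pairX X X') Z (Sum.inl a)] D)
    (hD2 : MeasurableSet[Gminus (pairX X X') Z (Sum.inr a)] D)
    {u : Set (E a)} (hu : MeasurableSet u) :
    P (D ∩ X' a ⁻¹' u) = P (D ∩ X a ⁻¹' u) := by
  have hpair := measurable_pairX hX hX'
  have hm1 : Gminus (pairX X X') Z (Sum.inl a) ≤ ‹MeasurableSpace Ω› := gminus_le hpair hZ _
  have hm2 : Gminus (pairX X X') Z (Sum.inr a) ≤ ‹MeasurableSpace Ω› := gminus_le hpair hZ _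
  have hDm : MeasurableSet D := ms_mono hm1 hD1
  set ind' : Ω → ℝ := (X' a ⁻¹' u).indicator (fun _ => (1:ℝ)) with hind'
  set ind : Ω → ℝ := (X a ⁻¹' u).indicator (fun _ => (1:ℝ)) with hind
  have hint' : Integrable ind' P := (integrable_const (1:ℝ)).indicator ((hX' a) hu)
  have hint : Integrable ind P := (integrable_const (1:ℝ)).indicator ((hX a) hu)
  have key : ∫ ω in D, ind' ω ∂P = ∫ ω in D, ind ω ∂P := by
    have e1 : ∫ ω in D, ind' ω ∂P
        = ∫ ω in D, (P[ind' | Gminus (pairX X X') Z (Sum.inr a)]) ω ∂P :=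
      (setIntegral_condExp hm2 hint' hD2).symm
    have e2 : ∫ ω in D, (P[ind' | Gminus (pairX X X') Z (Sum.inr a)]) ω ∂P
        = ∫ ω in D, (P[ind' | sigmaZ Z]) ω ∂P :=
      integral_congr_ae (ae_restrict_of_ae (hCI (Sum.inr a) u hu))
    have e3 : ∫ ω in D, (P[ind' | sigmaZ Z]) ω ∂P
        = ∫ ω in D, (P[ind | sigmaZ Z]) ω ∂P :=
      integral_congr_ae (ae_restrict_of_ae (hLaw a u hu).symm)
    have e4 : ∫ ω in D, (P[ind | sigmaZ Z]) ω ∂P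
        = ∫ ω in D, (P[ind | Gminus (pairX X X') Z (Sum.inl a)]) ω ∂P :=
      integral_congr_ae (ae_restrict_of_ae (hCI (Sum.inl a) u hu).symm)
    have e5 : ∫ ω in D, (P[ind | Gminus (pairX X X') Z (Sum.inl a)]) ω ∂P
        = ∫ ω in D, ind ω ∂P := setIntegral_condExp hm1 hint hD1
    rw [e1, e2, e3, e4, e5]
  have c1 : ∫ ω in D, ind' ω ∂P = (P (D ∩ X' a ⁻¹' u)).toReal := by
    rw [hind', setIntegral_indicator ((hX' a) hu), setIntegral_const, smul_eq_mul, mul_one, measureReal_def]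
  have c2 : ∫ ω in D, ind ω ∂P = (P (D ∩ X a ⁻¹' u)).toReal := by
    rw [hind, setIntegral_indicator ((hX a) hu), setIntegral_const, smul_eq_mul, mul_one, measureReal_def]
  have := c1 ▸ c2 ▸ key
  exact (ENNReal.toReal_eq_toReal_iff' (measure_ne_top P _) (measure_ne_top P _)).mp this

end AuxCore

section AuxMap
open MeasureTheory Set MeasurableSpace

variable {Ω E₀ : Type*} {A : Type*} {E : A → Type*}
variable [MeasurableSpace Ω] [MeasurableSpace E₀] [∀ a, MeasurableSpace (E a)]

lemma measurable_T {Z : Ω → E₀} (hZ : Measurable Z)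
    {X : ∀ a, Ω → E a} (hX : ∀ a, Measurable (X a)) :
    Measurable (fun ω => (Z ω, Xvec X ω)) :=
  hZ.prodMk (measurable_pi_lambda _ fun b => hX b)

lemma measurable_T' [DecidableEq A] {Z : Ω → E₀} (hZ : Measurable Z)
    {X X' : ∀ a, Ω → E a} (hX : ∀ a, Measurable (X a)) (hX' : ∀ a, Measurable (X' a)) (a : A) :
    Measurable (fun ω => (Z ω, Function.update (Xvec X ω) a (X' a ω))) := by
  refine hZ.prodMk (measurable_pi_lambda _ fun b => ?_)
  rcases eq_or_ne b a with rfl | hba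
  · simpa only [Function.update_self] using hX' b
  · simpa only [Function.update_of_ne hba, Xvec] using hX b

lemma map_update_eq [Fintype A] [DecidableEq A]
    {P : Measure Ω} [IsProbabilityMeasure P]
    {Z : Ω → E₀} (hZ : Measurable Z)
    {X X' : ∀ a, Ω → E a} (hX : ∀ a, Measurable (X a)) (hX' : ∀ a, Measurable (X' a))
    (hCI : CondIndep P (pairX X X') Z) (hLaw : SameCondLaw P X X' Z) (a : A) :
    Measure.map (fun ω => (Z ω, Function.update (Xvec X ω) a (X' a ω))) P
      = Measure.map (fun ω => (Z ω, Xvec X ω)) P := by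
  have hT := measurable_T hZ hX
  have hT' := measurable_T' hZ hX hX' a
  haveI : IsProbabilityMeasure (Measure.map (fun ω => (Z ω, Function.update (Xvec X ω) a (X' a ω))) P) :=
    Measure.isProbabilityMeasure_map hT'.aemeasurable
  haveI : IsProbabilityMeasure (Measure.map (fun ω => (Z ω, Xvec X ω)) P) :=
    Measure.isProbabilityMeasure_map hT.aemeasurable
  refine ext_of_generate_finite _
    ((generateFrom_eq_prod generateFrom_measurableSet generateFrom_pi
      isCountablySpanning_measurableSet
      (IsCountablySpanning.pi fun _ => isCountablySpanning_measurableSet)).symm)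
    (isPiSystem_measurableSet.prod isPiSystem_pi) ?_ (by simp)
  rintro _ ⟨s₀, hs₀, _, ⟨t, ht, rfl⟩, rfl⟩
  simp only [Set.mem_setOf_eq] at hs₀
  have ht' : ∀ i, MeasurableSet (t i) := fun i => ht i (Set.mem_univ i)
  set D : Set Ω := Z ⁻¹' s₀ ∩ ⋂ i, ⋂ (_ : i ≠ a), (X i) ⁻¹' (t i) with hD
  have hDset : MeasurableSet (univ.pi t) := MeasurableSet.univ_pi ht'
  have hpre' : (fun ω => (Z ω, Function.update (Xvec X ω) a (X' a ω))) ⁻¹' (s₀ ×ˢ univ.pi t)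
      = D ∩ X' a ⁻¹' (t a) := by
    ext ω
    simp only [Set.mem_preimage, Set.mem_prod, Set.mem_pi, Set.mem_univ, forall_true_left,
      hD, Set.mem_inter_iff, Set.mem_iInter]
    constructor
    · rintro ⟨h0, h1⟩
      refine ⟨⟨h0, fun i hi => ?_⟩, ?_⟩
      · have := h1 i; rwa [Function.update_of_ne hi] at this
      · have := h1 a; rwa [Function.update_self] at this
    · rintro ⟨⟨h0, h1⟩, h2⟩
      refine ⟨h0, fun i => ?_⟩
      rcases eq_or_ne i a with rfl | hia
      · rwa [Function.update_self]
      · rw [Function.update_of_ne hia]; exact h1 i hia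
  have hpre : (fun ω => (Z ω, Xvec X ω)) ⁻¹' (s₀ ×ˢ univ.pi t) = D ∩ X a ⁻¹' (t a) := by
    ext ω
    simp only [Set.mem_preimage, Set.mem_prod, Set.mem_pi, Set.mem_univ, forall_true_left,
      hD, Set.mem_inter_iff, Set.mem_iInter]
    constructor
    · rintro ⟨h0, h1⟩
      exact ⟨⟨h0, fun i _ => h1 i⟩, h1 a⟩
    · rintro ⟨⟨h0, h1⟩, h2⟩
      refine ⟨h0, fun i => ?_⟩
      rcases eq_or_ne i a with rfl | hia
      · exact h2
      · exact h1 i hia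
  rw [Measure.map_apply hT' (hs₀.prod hDset), Measure.map_apply hT (hs₀.prod hDset),
    hpre', hpre]
  -- membership of D in the two Gminus σ-algebras
  have hDmem : ∀ c : A ⊕ A, (∀ i : A, i ≠ a → Sum.inl i ≠ c) →
      MeasurableSet[Gminus (pairX X X') Z c] D := by
    intro c hc
    have hZmem : MeasurableSet[Gminus (pairX X X') Z c] (Z ⁻¹' s₀) :=
      ms_mono le_sup_right ⟨s₀, hs₀, rfl⟩
    refine hZmem.inter (MeasurableSet.iInter fun i => MeasurableSet.iInter fun hi => ?_)
    have : MeasurableSet[MeasurableSpace.comap (pairX X X' (Sum.inl i)) inferInstance]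
        ((X i) ⁻¹' (t i)) := ⟨t i, ht' i, rfl⟩
    exact ms_mono (le_sup_left.trans' (le_iSup₂ (f := fun b (_ : b ≠ c) =>
      MeasurableSpace.comap (pairX X X' b) inferInstance) (Sum.inl i) (hc i hi))) this
  exact swap_measure_eq hZ hX hX' hCI hLaw a
    (hDmem (Sum.inl a) (fun i hi h => hi (Sum.inl.injEq .. ▸ h))) 
    (hDmem (Sum.inr a) (fun i _ h => Sum.inl_ne_inr h)) (ht' a)

end AuxMap


/-- fourth-power difference bound for degenerate U-statistics by
the sum over connected quadruples. -/
theorem fourth_difference_connected_bound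
    {Ω E₀ : Type*} {A : Type*} {E : A → Type*}
    [MeasurableSpace Ω] [MeasurableSpace E₀] [∀ a, MeasurableSpace (E a)]
    [StandardBorelSpace E₀] [∀ a, StandardBorelSpace (E a)] [Fintype A] [DecidableEq A]
    (P : Measure Ω) [IsProbabilityMeasure P]
    (Z : Ω → E₀) (hZ : Measurable Z)
    (X X' : ∀ a, Ω → E a) (hX : ∀ a, Measurable (X a)) (hX' : ∀ a, Measurable (X' a))
    (hCI : CondIndep P (pairX X X') Z)
    (hLaw : SameCondLaw P X X' Z)
    (p : ℕ) (hp : 1 ≤ p)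
    -- the kernels h_I(z, x), each depending only on the coordinates in I
    (hI : Finset A → E₀ → (∀ a, E a) → ℝ)
    (hImeas : ∀ I, Measurable (fun q : E₀ × (∀ a, E a) => hI I q.1 q.2))
    (hIlocal : ∀ (I : Finset A) (z : E₀) (x y : ∀ a, E a),
      (∀ i ∈ I, x i = y i) → hI I z x = hI I z y)
    -- the components W_I = h_I(Z, (X_i)_{i ∈ I})
    (W : Finset A → Ω → ℝ)
    (hW : W = fun I ω => hI I (Z ω) (Xvec X ω))
    (hW4 : ∀ I : Finset A, I.card = p → MemLp (W I) 4 P)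
    -- degeneracy
    (hdeg : ∀ I : Finset A, I.card = p → ∀ a ∈ I,
      (P[W I | sigmaSub X Z (I.erase a)]) =ᵐ[P] 0)
    -- F = ∑_{|I| = p} W_I
    (F : Ω → ℝ)
    (hF : F = fun ω =>
      ∑ I ∈ Finset.univ.powerset.filter (fun I : Finset A => I.card = p), W I ω)
    -- the version of F with the a-th coordinate resampled
    (Frep : A → Ω → ℝ)
    (hFrep : Frep = fun a ω =>
      ∑ I ∈ Finset.univ.powerset.filter (fun I : Finset A => I.card = p),
        hI I (Z ω) (Function.update (Xvec X ω) a (X' a ω))) :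
    ∑ a, ∫ ω, (F ω - Frep a ω) ^ 4 ∂P
      ≤ 16 * (p : ℝ)
        * ∑' q : {q : Finset A × Finset A × Finset A × Finset A //
            q.1.card = p ∧ q.2.1.card = p ∧ q.2.2.1.card = p ∧ q.2.2.2.card = p ∧
            IntersectConnected4 q.1 q.2.1 q.2.2.1 q.2.2.2},
          |∫ ω, W q.val.1 ω * W q.val.2.1 ω * W q.val.2.2.1 ω * W q.val.2.2.2 ω ∂P| := by
  classical
  set 𝓕 : Finset (Finset A) := Finset.univ.powerset.filter (fun I : Finset A => I.card = p)
    with h𝓕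
  have hcard : ∀ I ∈ 𝓕, I.card = p := fun I hIF => (Finset.mem_filter.mp hIF).2
  have hWmem : ∀ I ∈ 𝓕, MemLp (W I) 4 P := fun I hIF => hW4 I (hcard I hIF)
  set m : Finset A × Finset A × Finset A × Finset A → ℝ :=
    fun q => ∫ ω, W q.1 ω * W q.2.1 ω * W q.2.2.1 ω * W q.2.2.2 ω ∂P with hm
  -- quadruple products
  have hquadmem : ∀ (s : Finset (Finset A)) (q : Finset A × Finset A × Finset A × Finset A),
      q ∈ s ×ˢ s ×ˢ s ×ˢ s → q.1 ∈ s ∧ q.2.1 ∈ s ∧ q.2.2.1 ∈ s ∧ q.2.2.2 ∈ s := by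
    intro s q hq
    simpa [Finset.mem_product, and_assoc] using hq
  have hprodint : ∀ q : Finset A × Finset A × Finset A × Finset A,
      q ∈ 𝓕 ×ˢ 𝓕 ×ˢ 𝓕 ×ˢ 𝓕 →
      Integrable (fun ω => W q.1 ω * W q.2.1 ω * W q.2.2.1 ω * W q.2.2.2 ω) P := by
    intro q hq
    obtain ⟨h1, h2, h3, h4⟩ := hquadmem 𝓕 q hq
    exact integrable_mul4 (hWmem _ h1) (hWmem _ h2) (hWmem _ h3) (hWmem _ h4)
  -- per-index bound
  have main_a : ∀ a : A, ∫ ω, (F ω - Frep a ω) ^ 4 ∂P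
      ≤ 16 * ∑ q ∈ (𝓕.filter (a ∈ ·)) ×ˢ (𝓕.filter (a ∈ ·)) ×ˢ
          (𝓕.filter (a ∈ ·)) ×ˢ (𝓕.filter (a ∈ ·)), m q := by
    intro a
    set fila : Finset (Finset A) := 𝓕.filter (a ∈ ·) with hfila
    have hfilsub : fila ⊆ 𝓕 := Finset.filter_subset _ _
    set Sa : Ω → ℝ := fun ω => ∑ I ∈ fila, W I ω with hSa
    set S'a : Ω → ℝ := fun ω => ∑ I ∈ fila, hI I (Z ω) (Function.update (Xvec X ω) a (X' a ω))
      with hS'a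
    -- pointwise difference identity
    have hdiff : ∀ ω, F ω - Frep a ω = Sa ω - S'a ω := by
      intro ω
      rw [hF, hFrep, hSa, hS'a]
      simp only [← h𝓕, ← Finset.sum_sub_distrib]
      refine (Finset.sum_filter_of_ne ?_).symm
      intro I hIF hne
      by_contra ha
      apply hne
      rw [hW]
      have : hI I (Z ω) (Function.update (Xvec X ω) a (X' a ω)) = hI I (Z ω) (Xvec X ω) :=
        hIlocal I (Z ω) _ _ (fun i hi => Function.update_of_ne (fun h => ha (by rwa [h] at hi)) _ _)
      simp [this]
    have hSamem : MemLp Sa 4 P := memLp_finset_sum _ fun I hIF => hWmem I (hfilsub hIF)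
    have hint4 : Integrable (fun ω => Sa ω ^ 4) P := by
      refine (integrable_mul4 hSamem hSamem hSamem hSamem).congr ?_
      filter_upwards with ω; ring
    -- the function on the product space
    set ψ : E₀ × (∀ b, E b) → ℝ := fun q => ∑ I ∈ fila, hI I q.1 q.2 with hψdef
    have hψ : Measurable ψ := Finset.measurable_sum _ fun I _ => hImeas I
    have hψ4 : Measurable fun q => ψ q ^ 4 := hψ.pow_const 4
    have hT := measurable_T hZ hX
    have hT' := measurable_T' hZ hX hX' a
    have hcompT : (fun ω => ψ (Z ω, Xvec X ω) ^ 4) = fun ω => Sa ω ^ 4 := by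
      funext ω; rw [hSa, hψdef]; simp [hW]
    have hmapeq := map_update_eq hZ hX hX' hCI hLaw a
    have hS'int : ∫ ω, S'a ω ^ 4 ∂P = ∫ ω, Sa ω ^ 4 ∂P := by
      have e1 : ∫ ω, S'a ω ^ 4 ∂P
          = ∫ q, ψ q ^ 4 ∂(Measure.map (fun ω =>
              (Z ω, Function.update (Xvec X ω) a (X' a ω))) P) :=
        (integral_map hT'.aemeasurable hψ4.aestronglyMeasurable).symm
      have e2 : ∫ q, ψ q ^ 4 ∂(Measure.map (fun ω => (Z ω, Xvec X ω)) P)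
          = ∫ ω, Sa ω ^ 4 ∂P := by
        rw [integral_map hT.aemeasurable hψ4.aestronglyMeasurable, hcompT]
      rw [e1, hmapeq, e2]
    have hint4' : Integrable (fun ω => S'a ω ^ 4) P := by
      have h1 : Integrable (fun q => ψ q ^ 4) (Measure.map (fun ω => (Z ω, Xvec X ω)) P) := by
        refine (integrable_map_measure hψ4.aestronglyMeasurable hT.aemeasurable).mpr ?_
        exact hint4.congr (by filter_upwards with ω using congrFun hcompT.symm ω)
      rw [← hmapeq] at h1
      exact (integrable_map_measure hψ4.aestronglyMeasurable hT'.aemeasurable).mp h1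
    -- the bound
    have hbound : ∫ ω, (F ω - Frep a ω) ^ 4 ∂P ≤ 16 * ∫ ω, Sa ω ^ 4 ∂P := by
      have hrw : (fun ω => (F ω - Frep a ω) ^ 4) = fun ω => (Sa ω - S'a ω) ^ 4 :=
        funext fun ω => by rw [hdiff ω]
      rw [hrw]
      have step1 : ∫ ω, (Sa ω - S'a ω) ^ 4 ∂P
          ≤ ∫ ω, 8 * Sa ω ^ 4 + 8 * S'a ω ^ 4 ∂P := by
        refine integral_mono_of_nonneg (Filter.Eventually.of_forall fun ω => by positivity)
          ((hint4.const_mul 8).add (hint4'.const_mul 8))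
          (Filter.Eventually.of_forall fun ω => pow4_sub_le _ _)
      have step2 : ∫ ω, 8 * Sa ω ^ 4 + 8 * S'a ω ^ 4 ∂P = 16 * ∫ ω, Sa ω ^ 4 ∂P := by
        rw [integral_add (hint4.const_mul 8) (hint4'.const_mul 8),
          integral_const_mul, integral_const_mul, hS'int]
        ring
      exact step1.trans (le_of_eq step2)
    -- identification of the fourth moment with the quadruple sum
    have hSa4sum : ∫ ω, Sa ω ^ 4 ∂P = ∑ q ∈ fila ×ˢ fila ×ˢ fila ×ˢ fila, m q := by
      have hpt : ∀ ω, Sa ω ^ 4 = ∑ q ∈ fila ×ˢ fila ×ˢ fila ×ˢ fila,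
          W q.1 ω * W q.2.1 ω * W q.2.2.1 ω * W q.2.2.2 ω := by
        intro ω
        rw [hSa]
        rw [sum4_expand fila (fun I => W I ω)]
        simp only [Finset.sum_product]
      have : (fun ω => Sa ω ^ 4) = fun ω => ∑ q ∈ fila ×ˢ fila ×ˢ fila ×ˢ fila,
          W q.1 ω * W q.2.1 ω * W q.2.2.1 ω * W q.2.2.2 ω := funext hpt
      rw [this, integral_finset_sum]
      intro q hq
      refine hprodint q ?_
      have := hquadmem fila q hq
      simp only [Finset.mem_product]
      exact ⟨hfilsub this.1, hfilsub this.2.1, hfilsub this.2.2.1, hfilsub this.2.2.2⟩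
    calc ∫ ω, (F ω - Frep a ω) ^ 4 ∂P ≤ 16 * ∫ ω, Sa ω ^ 4 ∂P := hbound
      _ = 16 * ∑ q ∈ fila ×ˢ fila ×ˢ fila ×ˢ fila, m q := by rw [hSa4sum]
  -- combinatorial reassembly
  set S : Set (Finset A × Finset A × Finset A × Finset A) :=
    {q | q.1.card = p ∧ q.2.1.card = p ∧ q.2.2.1.card = p ∧ q.2.2.2.card = p ∧
      IntersectConnected4 q.1 q.2.1 q.2.2.1 q.2.2.2} with hS
  have hg0 : ∀ q, 0 ≤ S.indicator (fun q' => |m q'|) q :=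
    fun q => Set.indicator_nonneg (fun q' _ => abs_nonneg _) q
  have step1 : ∑ a, ∫ ω, (F ω - Frep a ω) ^ 4 ∂P
      ≤ 16 * ∑ a, ∑ q ∈ (𝓕.filter (a ∈ ·)) ×ˢ (𝓕.filter (a ∈ ·)) ×ˢ
          (𝓕.filter (a ∈ ·)) ×ˢ (𝓕.filter (a ∈ ·)), m q := by
    rw [Finset.mul_sum]
    exact Finset.sum_le_sum fun a _ => main_a a
  have hfilter : ∀ a : A,
      (𝓕.filter (a ∈ ·)) ×ˢ (𝓕.filter (a ∈ ·)) ×ˢ (𝓕.filter (a ∈ ·)) ×ˢ (𝓕.filter (a ∈ ·))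
      = (𝓕 ×ˢ 𝓕 ×ˢ 𝓕 ×ˢ 𝓕).filter
          (fun q => a ∈ q.1 ∧ a ∈ q.2.1 ∧ a ∈ q.2.2.1 ∧ a ∈ q.2.2.2) := by
    intro a
    ext q
    simp only [Finset.mem_product, Finset.mem_filter]
    tauto
  have step2 : ∑ a, ∑ q ∈ (𝓕.filter (a ∈ ·)) ×ˢ (𝓕.filter (a ∈ ·)) ×ˢ
          (𝓕.filter (a ∈ ·)) ×ˢ (𝓕.filter (a ∈ ·)), m q
      = ∑ q ∈ 𝓕 ×ˢ 𝓕 ×ˢ 𝓕 ×ˢ 𝓕,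
          ((q.1 ∩ q.2.1 ∩ q.2.2.1 ∩ q.2.2.2).card : ℝ) * m q := by
    calc ∑ a, ∑ q ∈ (𝓕.filter (a ∈ ·)) ×ˢ (𝓕.filter (a ∈ ·)) ×ˢ
          (𝓕.filter (a ∈ ·)) ×ˢ (𝓕.filter (a ∈ ·)), m q
        = ∑ a : A, ∑ q ∈ 𝓕 ×ˢ 𝓕 ×ˢ 𝓕 ×ˢ 𝓕,
            if a ∈ q.1 ∧ a ∈ q.2.1 ∧ a ∈ q.2.2.1 ∧ a ∈ q.2.2.2 then m q else 0 := by
          refine Finset.sum_congr rfl fun a _ => ?_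
          rw [hfilter a, Finset.sum_filter]
      _ = ∑ q ∈ 𝓕 ×ˢ 𝓕 ×ˢ 𝓕 ×ˢ 𝓕, ∑ a : A,
            if a ∈ q.1 ∧ a ∈ q.2.1 ∧ a ∈ q.2.2.1 ∧ a ∈ q.2.2.2 then m q else 0 :=
          Finset.sum_comm
      _ = ∑ q ∈ 𝓕 ×ˢ 𝓕 ×ˢ 𝓕 ×ˢ 𝓕,
            ((q.1 ∩ q.2.1 ∩ q.2.2.1 ∩ q.2.2.2).card : ℝ) * m q := by
          refine Finset.sum_congr rfl fun q _ => ?_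
          have hiff : ∀ a : A, (a ∈ q.1 ∧ a ∈ q.2.1 ∧ a ∈ q.2.2.1 ∧ a ∈ q.2.2.2)
              ↔ a ∈ q.1 ∩ q.2.1 ∩ q.2.2.1 ∩ q.2.2.2 := by
            intro a
            simp [Finset.mem_inter, and_assoc]
          rw [Finset.sum_congr rfl (fun a _ => if_congr (hiff a) rfl rfl)]
          rw [Finset.sum_ite_mem, Finset.univ_inter, Finset.sum_const, nsmul_eq_mul]
  have hterm : ∀ q ∈ 𝓕 ×ˢ 𝓕 ×ˢ 𝓕 ×ˢ 𝓕,
      ((q.1 ∩ q.2.1 ∩ q.2.2.1 ∩ q.2.2.2).card : ℝ) * m q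
        ≤ (p : ℝ) * S.indicator (fun q' => |m q'|) q := by
    intro q hq
    obtain ⟨h1, h2, h3, h4⟩ := hquadmem 𝓕 q hq
    rcases (q.1 ∩ q.2.1 ∩ q.2.2.1 ∩ q.2.2.2).eq_empty_or_nonempty with he | hne
    · rw [he]
      simpa using mul_nonneg (Nat.cast_nonneg p) (hg0 q)
    · have hqS : q ∈ S :=
        ⟨hcard _ h1, hcard _ h2, hcard _ h3, hcard _ h4, conn_of_common hne⟩
      have hgq : S.indicator (fun q' => |m q'|) q = |m q| := Set.indicator_of_mem hqS _
      have hsub : q.1 ∩ q.2.1 ∩ q.2.2.1 ∩ q.2.2.2 ⊆ q.1 :=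
        Finset.inter_subset_left.trans
          (Finset.inter_subset_left.trans Finset.inter_subset_left)
      have hcle : ((q.1 ∩ q.2.1 ∩ q.2.2.1 ∩ q.2.2.2).card : ℝ) ≤ (p : ℝ) := by
        exact_mod_cast (Finset.card_le_card hsub).trans_eq (hcard _ h1)
      calc ((q.1 ∩ q.2.1 ∩ q.2.2.1 ∩ q.2.2.2).card : ℝ) * m q
          ≤ ((q.1 ∩ q.2.1 ∩ q.2.2.1 ∩ q.2.2.2).card : ℝ) * |m q| :=
            mul_le_mul_of_nonneg_left (le_abs_self _) (Nat.cast_nonneg _)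
        _ ≤ (p : ℝ) * |m q| := mul_le_mul_of_nonneg_right hcle (abs_nonneg _)
        _ = (p : ℝ) * S.indicator (fun q' => |m q'|) q := by rw [hgq]
  have htsum : (∑' q : {q : Finset A × Finset A × Finset A × Finset A //
        q.1.card = p ∧ q.2.1.card = p ∧ q.2.2.1.card = p ∧ q.2.2.2.card = p ∧
        IntersectConnected4 q.1 q.2.1 q.2.2.1 q.2.2.2},
        |∫ ω, W q.val.1 ω * W q.val.2.1 ω * W q.val.2.2.1 ω * W q.val.2.2.2 ω ∂P|)
      = ∑ q : Finset A × Finset A × Finset A × Finset A,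
          S.indicator (fun q' => |m q'|) q := by
    rw [← tsum_fintype (L := SummationFilter.unconditional _)]
    exact tsum_subtype S (fun q' => |m q'|)
  have step3 : ∑ q ∈ 𝓕 ×ˢ 𝓕 ×ˢ 𝓕 ×ˢ 𝓕,
        ((q.1 ∩ q.2.1 ∩ q.2.2.1 ∩ q.2.2.2).card : ℝ) * m q
      ≤ (p : ℝ) * ∑' q : {q : Finset A × Finset A × Finset A × Finset A //
          q.1.card = p ∧ q.2.1.card = p ∧ q.2.2.1.card = p ∧ q.2.2.2.card = p ∧
          IntersectConnected4 q.1 q.2.1 q.2.2.1 q.2.2.2},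
          |∫ ω, W q.val.1 ω * W q.val.2.1 ω * W q.val.2.2.1 ω * W q.val.2.2.2 ω ∂P| := by
    rw [htsum]
    calc ∑ q ∈ 𝓕 ×ˢ 𝓕 ×ˢ 𝓕 ×ˢ 𝓕,
          ((q.1 ∩ q.2.1 ∩ q.2.2.1 ∩ q.2.2.2).card : ℝ) * m q
        ≤ ∑ q ∈ 𝓕 ×ˢ 𝓕 ×ˢ 𝓕 ×ˢ 𝓕, (p : ℝ) * S.indicator (fun q' => |m q'|) q :=
          Finset.sum_le_sum hterm
      _ ≤ ∑ q : Finset A × Finset A × Finset A × Finset A,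
            (p : ℝ) * S.indicator (fun q' => |m q'|) q :=
          Finset.sum_le_sum_of_subset_of_nonneg (Finset.subset_univ _)
            (fun q _ _ => mul_nonneg (Nat.cast_nonneg p) (hg0 q))
      _ = (p : ℝ) * ∑ q : Finset A × Finset A × Finset A × Finset A,
            S.indicator (fun q' => |m q'|) q := by rw [Finset.mul_sum]
  calc ∑ a, ∫ ω, (F ω - Frep a ω) ^ 4 ∂P
      ≤ 16 * ∑ a, ∑ q ∈ (𝓕.filter (a ∈ ·)) ×ˢ (𝓕.filter (a ∈ ·)) ×ˢ
          (𝓕.filter (a ∈ ·)) ×ˢ (𝓕.filter (a ∈ ·)), m q := step1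
    _ = 16 * ∑ q ∈ 𝓕 ×ˢ 𝓕 ×ˢ 𝓕 ×ˢ 𝓕,
          ((q.1 ∩ q.2.1 ∩ q.2.2.1 ∩ q.2.2.2).card : ℝ) * m q := by rw [step2]
    _ ≤ 16 * ((p : ℝ) * ∑' q : {q : Finset A × Finset A × Finset A × Finset A //
          q.1.card = p ∧ q.2.1.card = p ∧ q.2.2.1.card = p ∧ q.2.2.2.card = p ∧
          IntersectConnected4 q.1 q.2.1 q.2.2.1 q.2.2.2},
          |∫ ω, W q.val.1 ω * W q.val.2.1 ω * W q.val.2.2.1 ω * W q.val.2.2.2 ω ∂P|) :=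
        mul_le_mul_of_nonneg_left step3 (by norm_num)
    _ = 16 * (p : ℝ) * ∑' q : {q : Finset A × Finset A × Finset A × Finset A //
          q.1.card = p ∧ q.2.1.card = p ∧ q.2.2.1.card = p ∧ q.2.2.2.card = p ∧
          IntersectConnected4 q.1 q.2.1 q.2.2.1 q.2.2.2},
          |∫ ω, W q.val.1 ω * W q.val.2.1 ω * W q.val.2.2.1 ω * W q.val.2.2.2 ω ∂P| := by
        ring
end
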